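/- arXiv:2508.04822 — 2 statements merged into one kernel-verified Lean document; each statement's English description precedes it below -/
import Mathlib

section
/- Let u(x) = (∑_j θ_j(x^(j)))^k where each θ_j: ℝ₊ → ℝ₊ is twice differentiable and homogeneous of degree r. If r ∈ (0,1) and k ∈ (0, 1/r], or r < 0 and k ∈ [1/r, 0), then u is concave on the open positive orthant. -/
open Real Set

private lemma combo_pos' {a b s t : ℝ} (ha : 0 ≤ a) (hb : 0 ≤ b) (hab : a + b = 1)
    (hs : 0 < s) (ht : 0 < t) : 0 < a * s + b * t := by
  rcases eq_or_lt_of_le ha with h | h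
  · have hb1 : b = 1 := by linarith
    simpa [← h, hb1] using ht
  · exact add_pos_of_pos_of_nonneg (mul_pos h hs) (mul_nonneg hb ht.le)

private lemma rpow_concave01' {r : ℝ} (hr0 : 0 < r) (hr1 : r < 1) {s t a b : ℝ}
    (hs : 0 ≤ s) (ht : 0 ≤ t) (ha : 0 ≤ a) (hb : 0 ≤ b) (hab : a + b = 1) :
    a * s ^ r + b * t ^ r ≤ (a * s + b * t) ^ r := by
  have := (Real.strictConcaveOn_rpow hr0 hr1).concaveOn.2 (mem_Ici.2 hs) (mem_Ici.2 ht)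
    ha hb hab
  simpa [smul_eq_mul] using this

private lemma rpow_convex_neg' {r : ℝ} (hr : r < 0) {s t a b : ℝ}
    (hs : 0 < s) (ht : 0 < t) (ha : 0 ≤ a) (hb : 0 ≤ b) (hab : a + b = 1) :
    (a * s + b * t) ^ r ≤ a * s ^ r + b * t ^ r := by
  have hst : 0 < a * s + b * t := combo_pos' ha hb hab hs ht
  rw [Real.rpow_def_of_pos hs, Real.rpow_def_of_pos ht, Real.rpow_def_of_pos hst]
  have hlog : a * Real.log s + b * Real.log t ≤ Real.log (a * s + b * t) := by
    have := strictConcaveOn_log_Ioi.concaveOn.2 (mem_Ioi.2 hs) (mem_Ioi.2 ht) ha hb hab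
    simpa [smul_eq_mul] using this
  have h2 : Real.log (a * s + b * t) * r ≤ (a * Real.log s + b * Real.log t) * r :=
    mul_le_mul_of_nonpos_right hlog hr.le
  calc Real.exp (Real.log (a * s + b * t) * r)
      ≤ Real.exp ((a * Real.log s + b * Real.log t) * r) := Real.exp_le_exp.2 h2
    _ = Real.exp (a * (Real.log s * r) + b * (Real.log t * r)) := by ring_nf
    _ ≤ a * Real.exp (Real.log s * r) + b * Real.exp (Real.log t * r) := by
        have := convexOn_exp.2 (Set.mem_univ (Real.log s * r))
          (Set.mem_univ (Real.log t * r)) ha hb hab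
        simpa [smul_eq_mul] using this

/-- concavity of additively homogeneous utilities
`u(x) = (∑_j θ_j(x_j))^k` under the spectrum conditions on `(k, r)`. -/
theorem stmt7 (n : ℕ) (r k : ℝ)
    (θ : Fin n → ℝ → ℝ)
    (hsm : ∀ j, ContDiffOn ℝ 2 (θ j) (Set.Ioi (0 : ℝ)))
    (hnneg : ∀ j, ∀ t : ℝ, 0 < t → 0 ≤ θ j t)
    (hhom : ∀ j, ∀ α : ℝ, 0 < α → ∀ t : ℝ, 0 < t → θ j (α * t) = α ^ r * θ j t)
    (hpos : ∀ x : Fin n → ℝ, (∀ i, 0 < x i) → 0 < ∑ j, θ j (x j))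
    (hkr : (0 < r ∧ r < 1 ∧ 0 < k ∧ k ≤ 1 / r) ∨ (r < 0 ∧ 1 / r ≤ k ∧ k < 0)) :
    ConcaveOn ℝ {x : Fin n → ℝ | ∀ i, 0 < x i}
      (fun x => (∑ j, θ j (x j)) ^ k) := by
  have hrne : r ≠ 0 := by rcases hkr with ⟨h, _⟩ | ⟨h, _⟩; exacts [h.ne', h.ne]
  have hd0 : 0 < r * k := by
    rcases hkr with ⟨h1, _, h2, _⟩ | ⟨h1, _, h2⟩
    · exact mul_pos h1 h2
    · exact mul_pos_of_neg_of_neg h1 h2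
  have hd1 : r * k ≤ 1 := by
    rcases hkr with ⟨h1, _, _, h2⟩ | ⟨h1, h2, _⟩
    · calc r * k ≤ r * (1 / r) := mul_le_mul_of_nonneg_left h2 h1.le
        _ = 1 := mul_one_div_cancel hrne
    · calc r * k ≤ r * (1 / r) := mul_le_mul_of_nonpos_left h2 h1.le
        _ = 1 := mul_one_div_cancel hrne
  set c : Fin n → ℝ := fun j => θ j 1 with hcdef
  have htheta : ∀ j, ∀ t : ℝ, 0 < t → θ j t = c j * t ^ r := by
    intro j t ht
    have := hhom j t ht 1 one_pos
    rw [mul_one] at this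
    rw [this, mul_comm]
  have hsum_eq : ∀ x : Fin n → ℝ, (∀ i, 0 < x i) →
      ∑ j, θ j (x j) = ∑ j, c j * (x j) ^ r := fun x hx =>
    Finset.sum_congr rfl fun j _ => htheta j (x j) (hx j)
  have hgpos : ∀ x : Fin n → ℝ, (∀ i, 0 < x i) → 0 < ∑ j, c j * (x j) ^ r := by
    intro x hx
    rw [← hsum_eq x hx]
    exact hpos x hx
  -- key concavity of M = g^(1/r)
  have hkey : ∀ x y : Fin n → ℝ, (∀ i, 0 < x i) → (∀ i, 0 < y i) →
      ∀ a b : ℝ, 0 ≤ a → 0 ≤ b → a + b = 1 →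
      a * (∑ j, c j * (x j) ^ r) ^ (1 / r) + b * (∑ j, c j * (y j) ^ r) ^ (1 / r) ≤
        (∑ j, c j * (a * x j + b * y j) ^ r) ^ (1 / r) := by
    intro x y hx hy a b ha hb hab
    set Gx := ∑ j, c j * (x j) ^ r with hGxdef
    set Gy := ∑ j, c j * (y j) ^ r with hGydef
    have hGx : 0 < Gx := hgpos x hx
    have hGy : 0 < Gy := hgpos y hy
    set A := Gx ^ (1 / r) with hAdef
    set B := Gy ^ (1 / r) with hBdef
    have hA : 0 < A := Real.rpow_pos_of_pos hGx _
    have hB : 0 < B := Real.rpow_pos_of_pos hGy _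
    have hC : 0 < a * A + b * B := combo_pos' ha hb hab hA hB
    set C := a * A + b * B with hCdef
    set μ := a * A / C with hμdef
    set ν := b * B / C with hνdef
    have hμ : 0 ≤ μ := div_nonneg (mul_nonneg ha hA.le) hC.le
    have hν : 0 ≤ ν := div_nonneg (mul_nonneg hb hB.le) hC.le
    have hμν : μ + ν = 1 := by
      rw [hμdef, hνdef, ← add_div, hCdef, div_self hC.ne']
    have hAr : A ^ r = Gx := by
      rw [hAdef, ← Real.rpow_mul hGx.le, one_div_mul_cancel hrne, Real.rpow_one]
    have hBr : B ^ r = Gy := by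
      rw [hBdef, ← Real.rpow_mul hGy.le, one_div_mul_cancel hrne, Real.rpow_one]
    have hdecomp : ∀ j, a * x j + b * y j = C * (μ * (x j / A) + ν * (y j / B)) := by
      intro j
      rw [hμdef, hνdef]
      field_simp
    have hF : ∑ j, c j * (C ^ r * (μ * (x j / A) ^ r + ν * (y j / B) ^ r)) = C ^ r := by
      have step : ∀ j ∈ Finset.univ,
          c j * (C ^ r * (μ * (x j / A) ^ r + ν * (y j / B) ^ r)) =
            (C ^ r * μ / A ^ r) * (c j * (x j) ^ r) +
              (C ^ r * ν / B ^ r) * (c j * (y j) ^ r) := by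
        intro j _
        rw [Real.div_rpow (hx j).le hA.le, Real.div_rpow (hy j).le hB.le]
        field_simp
      rw [Finset.sum_congr rfl step, Finset.sum_add_distrib, ← Finset.mul_sum,
        ← Finset.mul_sum, ← hGxdef, ← hGydef, ← hAr, ← hBr,
        div_mul_cancel₀ _ (Real.rpow_pos_of_pos hA r).ne',
        div_mul_cancel₀ _ (Real.rpow_pos_of_pos hB r).ne', ← mul_add, hμν, mul_one]
    have hinner_nonneg : ∀ j, 0 ≤ μ * (x j / A) + ν * (y j / B) := by
      intro j
      exact add_nonneg (mul_nonneg hμ (div_nonneg (hx j).le hA.le))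
        (mul_nonneg hν (div_nonneg (hy j).le hB.le))
    have hzr : ∀ j, (a * x j + b * y j) ^ r =
        C ^ r * (μ * (x j / A) + ν * (y j / B)) ^ r := by
      intro j
      rw [hdecomp j, Real.mul_rpow hC.le (hinner_nonneg j)]
    rcases hkr with ⟨hr0, hr1, _⟩ | ⟨hr0, _⟩
    · -- 0 < r < 1
      have hterm : ∀ j ∈ Finset.univ,
          c j * (C ^ r * (μ * (x j / A) ^ r + ν * (y j / B) ^ r)) ≤
            c j * (a * x j + b * y j) ^ r := by
        intro j _
        rw [hzr j]
        refine mul_le_mul_of_nonneg_left (mul_le_mul_of_nonneg_left ?_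
          (Real.rpow_pos_of_pos hC r).le) (hnneg j 1 one_pos)
        exact rpow_concave01' hr0 hr1 (div_nonneg (hx j).le hA.le)
          (div_nonneg (hy j).le hB.le) hμ hν hμν
      have hge : C ^ r ≤ ∑ j, c j * (a * x j + b * y j) ^ r := by
        rw [← hF]; exact Finset.sum_le_sum hterm
      have h := Real.rpow_le_rpow (Real.rpow_pos_of_pos hC r).le hge
        (one_div_nonneg.2 hr0.le)
      rwa [← Real.rpow_mul hC.le, mul_one_div_cancel hrne, Real.rpow_one] at h
    · -- r < 0
      have hterm : ∀ j ∈ Finset.univ,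
          c j * (a * x j + b * y j) ^ r ≤
            c j * (C ^ r * (μ * (x j / A) ^ r + ν * (y j / B) ^ r)) := by
        intro j _
        rw [hzr j]
        refine mul_le_mul_of_nonneg_left (mul_le_mul_of_nonneg_left ?_
          (Real.rpow_pos_of_pos hC r).le) (hnneg j 1 one_pos)
        exact rpow_convex_neg' hr0 (div_pos (hx j) hA) (div_pos (hy j) hB) hμ hν hμν
      have hle : ∑ j, c j * (a * x j + b * y j) ^ r ≤ C ^ r := by
        rw [← hF]; exact Finset.sum_le_sum hterm
      have hzpos : 0 < ∑ j, c j * (a * x j + b * y j) ^ r := by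
        have := hgpos (fun i => a * x i + b * y i)
          (fun i => combo_pos' ha hb hab (hx i) (hy i))
        simpa using this
      have h := Real.rpow_le_rpow_of_nonpos hzpos hle (one_div_nonpos.2 hr0.le)
      rwa [← Real.rpow_mul hC.le, mul_one_div_cancel hrne, Real.rpow_one] at h
  -- assemble
  have hSconv : Convex ℝ {x : Fin n → ℝ | ∀ i, 0 < x i} := by
    intro x hx y hy a b ha hb hab
    intro i
    simpa [smul_eq_mul] using combo_pos' ha hb hab (hx i) (hy i)
  refine ⟨hSconv, ?_⟩
  intro x hx y hy a b ha hb hab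
  have hx' : ∀ i, 0 < x i := hx
  have hy' : ∀ i, 0 < y i := hy
  have hz' : ∀ i, 0 < a * x i + b * y i := fun i => combo_pos' ha hb hab (hx' i) (hy' i)
  have hz'' : ∀ i, 0 < (a • x + b • y) i := by
    intro i; simpa [smul_eq_mul] using hz' i
  have hzeq : ∑ j, θ j ((a • x + b • y) j) = ∑ j, c j * (a * x j + b * y j) ^ r := by
    rw [hsum_eq _ hz'']
    exact Finset.sum_congr rfl fun j _ => by simp [smul_eq_mul]
  simp only [smul_eq_mul]
  rw [hsum_eq x hx', hsum_eq y hy', hzeq]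
  set Gx := ∑ j, c j * (x j) ^ r with hGxdef
  set Gy := ∑ j, c j * (y j) ^ r with hGydef
  set Gz := ∑ j, c j * (a * x j + b * y j) ^ r with hGzdef
  have hGx : 0 < Gx := hgpos x hx'
  have hGy : 0 < Gy := hgpos y hy'
  have hGz : 0 < Gz := by
    have := hgpos (fun i => a * x i + b * y i) hz'
    simpa using this
  have hexp : 1 / r * (r * k) = k := by field_simp
  have hGxk : Gx ^ k = (Gx ^ (1 / r)) ^ (r * k) := by
    rw [← Real.rpow_mul hGx.le, hexp]
  have hGyk : Gy ^ k = (Gy ^ (1 / r)) ^ (r * k) := by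
    rw [← Real.rpow_mul hGy.le, hexp]
  have hGzk : Gz ^ k = (Gz ^ (1 / r)) ^ (r * k) := by
    rw [← Real.rpow_mul hGz.le, hexp]
  rw [hGxk, hGyk, hGzk]
  set A := Gx ^ (1 / r) with hAdef
  set B := Gy ^ (1 / r) with hBdef
  have hA : 0 < A := Real.rpow_pos_of_pos hGx _
  have hB : 0 < B := Real.rpow_pos_of_pos hGy _
  calc a * A ^ (r * k) + b * B ^ (r * k)
      ≤ (a * A + b * B) ^ (r * k) := by
        have := (Real.concaveOn_rpow hd0.le hd1).2 (mem_Ici.2 hA.le) (mem_Ici.2 hB.le)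
          ha hb hab
        simpa [smul_eq_mul] using this
    _ ≤ (Gz ^ (1 / r)) ^ (r * k) := by
        refine Real.rpow_le_rpow (combo_pos' ha hb hab hA hB).le ?_ hd0.le
        exact hkey x y hx' hy' a b ha hb hab
end

section
/- If a sequence t_0 = 1, t_1, t_2, … of nonnegative reals satisfies t_{k+1} ≤ t_k·(1 - c/Δ_k) whenever t_{k+1} > 0, where Δ_k = φ_k - φ_{k+1} > 0 and φ_k is a nonincreasing real sequence with φ_0 - φ* < ∞ bounding ∑ Δ_j, then t_{k+1} ≤ (1 - c(k+1)/(φ_0 - φ_{k+1}))^{k+1} for all k, by the AM–GM and harmonic-mean inequalities applied to the product ∏_{j=0}^k (1 - c/Δ_j). -/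
open Finset in
/-- AM-GM for `n` nonnegative reals: product ≤ (average)^n. -/
lemma amgm_range (n : ℕ) (hn : 0 < n) (z : ℕ → ℝ) (hz : ∀ i ∈ range n, 0 ≤ z i) :
    ∏ i ∈ range n, z i ≤ ((∑ i ∈ range n, z i) / n) ^ n := by
  have h := Real.geom_mean_le_arith_mean (range n) (fun _ => 1) z
    (fun i _ => zero_le_one) (by simp [hn]) hz
  simp only [Real.rpow_one, one_mul, sum_const, card_range, nsmul_eq_mul, mul_one] at h
  have hp : (0:ℝ) ≤ ∏ i ∈ range n, z i := prod_nonneg hz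
  have h2 : ((∏ i ∈ range n, z i) ^ ((n:ℝ)⁻¹)) ^ (n:ℕ)
      ≤ ((∑ i ∈ range n, z i) / n) ^ (n:ℕ) := by
    apply pow_le_pow_left₀ (Real.rpow_nonneg hp _) h
  rwa [← Real.rpow_natCast ((∏ i ∈ range n, z i) ^ ((n:ℝ)⁻¹)) n,
    ← Real.rpow_mul hp, inv_mul_cancel₀ (by positivity), Real.rpow_one] at h2

open Finset in
/-- AM-HM auxiliary: `n² ≤ (∑ Δ) * (∑ Δ⁻¹)` for positive `Δ`. -/
lemma amhm_range (n : ℕ) (Δ : ℕ → ℝ) (hΔ : ∀ i ∈ range n, 0 < Δ i) :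
    (n : ℝ) ^ 2 ≤ (∑ i ∈ range n, Δ i) * (∑ i ∈ range n, (Δ i)⁻¹) := by
  have h := Finset.sum_mul_sq_le_sq_mul_sq (range n)
    (fun i => Real.sqrt (Δ i)) (fun i => (Real.sqrt (Δ i))⁻¹)
  have h1 : ∀ i ∈ range n, Real.sqrt (Δ i) * (Real.sqrt (Δ i))⁻¹ = 1 := fun i hi =>
    mul_inv_cancel₀ (Real.sqrt_pos.2 (hΔ i hi)).ne'
  rw [Finset.sum_congr rfl h1] at h
  simp only [sum_const, card_range, nsmul_eq_mul, mul_one] at h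
  calc (n:ℝ)^2 ≤ _ := h
    _ = (∑ i ∈ range n, Δ i) * (∑ i ∈ range n, (Δ i)⁻¹) := by
        congr 1
        · exact Finset.sum_congr rfl fun i hi => Real.sq_sqrt (hΔ i hi).le
        · refine Finset.sum_congr rfl fun i hi => ?_
          rw [← Real.sqrt_inv, Real.sq_sqrt (inv_nonneg.2 (hΔ i hi).le)]

/-- for a strictly decreasing sequence `φ` with gaps
`Δ_k = φ k - φ (k+1) > c > 0` and nonnegative `t` with `t 0 = 1` and
`t (k+1) ≤ t k (1 - c/Δ_k)` whenever `t (k+1) > 0`, one has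
`t (k+1) ≤ (1 - c(k+1)/(φ 0 - φ (k+1)))^(k+1)`. -/
theorem stmt18 (c : ℝ) (hc : 0 < c) (φ t : ℕ → ℝ)
    (ht0 : t 0 = 1) (htnn : ∀ k, 0 ≤ t k)
    (hΔ : ∀ k, c < φ k - φ (k + 1))
    (hrec : ∀ k, 0 < t (k + 1) →
      t (k + 1) ≤ t k * (1 - c / (φ k - φ (k + 1)))) :
    ∀ k : ℕ, t (k + 1) ≤ (1 - c * (k + 1) / (φ 0 - φ (k + 1))) ^ (k + 1) := by
  set Δ : ℕ → ℝ := fun j => φ j - φ (j + 1) with hΔdef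
  have hΔpos : ∀ j, 0 < Δ j := fun j => hc.trans (hΔ j)
  have hfac_pos : ∀ j, 0 < 1 - c / Δ j := by
    intro j
    have : c / Δ j < 1 := (div_lt_one (hΔpos j)).2 (hΔ j)
    linarith
  -- Step 1: t n ≤ product
  have hprod : ∀ n : ℕ, t n ≤ ∏ j ∈ Finset.range n, (1 - c / Δ j) := by
    intro n
    induction n with
    | zero => simp [ht0]
    | succ k ih =>
      rcases lt_or_ge 0 (t (k+1)) with hpos | hle
      · calc t (k+1) ≤ t k * (1 - c / Δ k) := hrec k hpos
          _ ≤ (∏ j ∈ Finset.range k, (1 - c / Δ j)) * (1 - c / Δ k) := by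
              apply mul_le_mul_of_nonneg_right ih (hfac_pos k).le
          _ = ∏ j ∈ Finset.range (k+1), (1 - c / Δ j) := (Finset.prod_range_succ _ _).symm
      · exact hle.trans (Finset.prod_nonneg fun j _ => (hfac_pos j).le)
  intro k
  set n : ℕ := k + 1 with hn
  have hnpos : 0 < n := Nat.succ_pos k
  -- sums
  have hS : ∑ j ∈ Finset.range n, Δ j = φ 0 - φ n := Finset.sum_range_sub' φ n
  have hSpos : (0:ℝ) < ∑ j ∈ Finset.range n, Δ j :=
    Finset.sum_pos (fun j _ => hΔpos j) (Finset.nonempty_range_iff.2 hnpos.ne')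
  have hHpos : (0:ℝ) < ∑ j ∈ Finset.range n, (Δ j)⁻¹ :=
    Finset.sum_pos (fun j _ => inv_pos.2 (hΔpos j)) (Finset.nonempty_range_iff.2 hnpos.ne')
  have hamhm := amhm_range n Δ (fun j _ => hΔpos j)
  -- Step 2: AM-GM
  have hamgm := amgm_range n hnpos (fun j => 1 - c / Δ j) (fun j _ => (hfac_pos j).le)
  -- the average
  have hn' : (0:ℝ) < n := Nat.cast_pos.2 hnpos
  have hsum : ∑ j ∈ Finset.range n, (1 - c / Δ j)
      = n - c * ∑ j ∈ Finset.range n, (Δ j)⁻¹ := by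
    rw [Finset.sum_sub_distrib, Finset.mul_sum]
    simp [div_eq_mul_inv]
  have havg : (∑ j ∈ Finset.range n, (1 - c / Δ j)) / n
      = 1 - (c * ∑ j ∈ Finset.range n, (Δ j)⁻¹) / n := by
    rw [hsum, sub_div, div_self hn'.ne']
  -- Step 3: bound average
  have hbase : (∑ j ∈ Finset.range n, (1 - c / Δ j)) / n
      ≤ 1 - c * n / (φ 0 - φ n) := by
    rw [havg, ← hS]
    have key : c * n / (∑ j ∈ Finset.range n, Δ j)
        ≤ (c * ∑ j ∈ Finset.range n, (Δ j)⁻¹) / n := by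
      rw [div_le_div_iff₀ hSpos hn']
      nlinarith [hamhm, hc.le, hSpos.le, hHpos.le]
    linarith
  have havg_nonneg : 0 ≤ (∑ j ∈ Finset.range n, (1 - c / Δ j)) / n := by
    apply div_nonneg (Finset.sum_nonneg fun j _ => (hfac_pos j).le) (Nat.cast_nonneg n)
  calc t n ≤ ∏ j ∈ Finset.range n, (1 - c / Δ j) := hprod n
    _ ≤ ((∑ j ∈ Finset.range n, (1 - c / Δ j)) / n) ^ n := hamgm
    _ ≤ (1 - c * n / (φ 0 - φ n)) ^ n := pow_le_pow_left₀ havg_nonneg hbase n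
    _ = (1 - c * (k + 1) / (φ 0 - φ (k + 1))) ^ (k+1) := by norm_num [hn]
end
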